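/- The PSD completable cone Π_G(S_+^{|V|}) and the cone S_+^{|V|} ∩ S_G of PSD matrices with sparsity pattern G form a pair of dual cones inside the space S_G of symmetric matrices with sparsity pattern G, with respect to the trace inner product. -/

import Mathlib

open Matrix

section AuxPSD

variable {V : Type*} [Fintype V] [DecidableEq V]

lemma trace_form (A B : Matrix V V ℝ) :
    Matrix.trace (Aᵀ * B) = ∑ p : V × V, A p.1 p.2 * B p.1 p.2 := by
  simp [Matrix.trace, Matrix.mul_apply, Matrix.diag, Fintype.sum_prod_type]
  exact Finset.sum_comm

lemma psd_diag_nonneg {P : Matrix V V ℝ} (hP : P.PosSemidef) (i : V) : 0 ≤ P i i := by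
  have := hP.dotProduct_mulVec_nonneg (Pi.single i 1)
  simpa [Matrix.mulVec_single, single_dotProduct] using this

lemma psd_entry_abs_le {P : Matrix V V ℝ} (hP : P.PosSemidef) (β γ : V) :
    |P β γ| ≤ (P β β + P γ γ) / 2 := by
  have hsym : P γ β = P β γ := by
    have := hP.1
    rw [Matrix.IsHermitian] at this
    conv_lhs => rw [← this]
    simp [Matrix.conjTranspose_apply]
  have key : ∀ s : ℝ, 0 ≤ P β β + 2 * s * P β γ + s ^ 2 * P γ γ := by
    intro s
    have h2 := hP.dotProduct_mulVec_nonneg ((Pi.single β 1 : V → ℝ) + s • (Pi.single γ 1 : V → ℝ))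
    rw [show star ((Pi.single β 1 : V → ℝ) + s • (Pi.single γ 1 : V → ℝ))
        = (Pi.single β 1 : V → ℝ) + s • (Pi.single γ 1 : V → ℝ) by simp] at h2
    rw [Matrix.mulVec_add, Matrix.mulVec_smul, dotProduct_add, add_dotProduct,
      add_dotProduct, smul_dotProduct, smul_dotProduct,
      dotProduct_smul, dotProduct_smul, Matrix.mulVec_single,
      Matrix.mulVec_single] at h2
    simp only [single_dotProduct, Pi.smul_apply, MulOpposite.smul_eq_mul_unop, MulOpposite.unop_op,
      Matrix.col_apply, mul_one, one_mul, smul_eq_mul] at h2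
    refine h2.trans_eq ?_
    rw [hsym]; ring
  have k1 := key 1
  have k2 := key (-1)
  norm_num at k1 k2
  rw [abs_le]
  constructor <;> [linarith; linarith]

lemma psd_smul {P : Matrix V V ℝ} (hP : P.PosSemidef) {c : ℝ} (hc : 0 ≤ c) :
    (c • P).PosSemidef := by
  refine Matrix.PosSemidef.of_dotProduct_mulVec_nonneg ?_ fun x => ?_
  · unfold Matrix.IsHermitian
    rw [Matrix.conjTranspose_smul, hP.1]
    simp
  · rw [Matrix.smul_mulVec, dotProduct_smul, smul_eq_mul]
    exact mul_nonneg hc (hP.dotProduct_mulVec_nonneg x)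

open scoped MatrixOrder in
lemma psd_trace_mul_nonneg {Q P : Matrix V V ℝ} (hQ : Q.PosSemidef) (hP : P.PosSemidef) :
    0 ≤ Matrix.trace (Qᵀ * P) := by
  obtain ⟨B, hB⟩ := CStarAlgebra.nonneg_iff_eq_star_mul_self.mp hP.nonneg
  rw [Matrix.star_eq_conjTranspose] at hB
  subst hB
  have hQt : Qᵀ = Q := by
    ext i j
    have := congrFun (congrFun hQ.1 i) j
    simpa [Matrix.conjTranspose_apply] using this
  rw [hQt, show Q * (Bᴴ * B) = Q * Bᴴ * B by rw [Matrix.mul_assoc],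
    Matrix.trace_mul_comm, ← Matrix.mul_assoc]
  have hpsd : (B * Q * Bᴴ).PosSemidef := hQ.mul_mul_conjTranspose_same B
  exact Finset.sum_nonneg fun i _ => psd_diag_nonneg hpsd i

lemma isClosed_psd : IsClosed {P : Matrix V V ℝ | P.PosSemidef} := by
  have hE : {P : Matrix V V ℝ | P.PosSemidef} =
      (⋂ (i : V) (j : V), {P : Matrix V V ℝ | P j i = P i j}) ∩
        ⋂ (x : V → ℝ), {P : Matrix V V ℝ | 0 ≤ ∑ i, x i * ∑ j, P i j * x j} := by
    ext P
    simp only [Set.mem_setOf_eq, Set.mem_inter_iff, Set.mem_iInter]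
    constructor
    · intro h
      refine ⟨fun i j => ?_, fun x => ?_⟩
      · have := congrFun (congrFun h.1 i) j
        simpa [Matrix.conjTranspose_apply] using this
      · have := h.dotProduct_mulVec_nonneg x
        simpa [dotProduct, Matrix.mulVec] using this
    · intro h
      refine Matrix.PosSemidef.of_dotProduct_mulVec_nonneg ?_ fun x => ?_
      · ext i j
        simpa [Matrix.conjTranspose_apply] using h.1 i j
      · have := h.2 x
        simpa [dotProduct, Matrix.mulVec] using this
  rw [hE]
  have celem : ∀ i j : V, Continuous fun P : Matrix V V ℝ => P i j := fun i j =>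
    (continuous_apply j).comp (continuous_apply i)
  refine IsClosed.inter (isClosed_iInter fun i => isClosed_iInter fun j =>
    isClosed_eq (celem j i) (celem i j)) (isClosed_iInter fun x => ?_)
  exact isClosed_le continuous_const <| continuous_finset_sum _ fun i _ =>
    continuous_const.mul <| continuous_finset_sum _ fun j _ => (celem i j).mul continuous_const

section ProjStuff
variable (G : SimpleGraph V) [DecidableRel G.Adj]

private def projM (P : Matrix V V ℝ) : Matrix V V ℝ :=
  Matrix.of fun β γ => if β = γ ∨ G.Adj β γ then P β γ else 0

lemma projM_add (P Q : Matrix V V ℝ) : projM G (P + Q) = projM G P + projM G Q := by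
  ext β γ
  simp only [projM, Matrix.of_apply, Matrix.add_apply]
  split <;> simp

lemma projM_smul (c : ℝ) (P : Matrix V V ℝ) : projM G (c • P) = c • projM G P := by
  ext β γ
  simp only [projM, Matrix.of_apply, Matrix.smul_apply, smul_eq_mul]
  split <;> simp

lemma projM_trace (P : Matrix V V ℝ) : Matrix.trace (projM G P) = Matrix.trace P := by
  simp [Matrix.trace, Matrix.diag, projM]

lemma projM_continuous : Continuous (projM G (V := V)) := by
  apply continuous_pi; intro β; apply continuous_pi; intro γ
  show Continuous fun P : Matrix V V ℝ => if β = γ ∨ G.Adj β γ then P β γ else 0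
  split
  · exact (continuous_apply γ).comp (continuous_apply β)
  · exact continuous_const

/-- pattern identity -/
lemma trace_eq_of_pattern {Q : Matrix V V ℝ}
    (hQ : ∀ β γ, β ≠ γ → ¬ G.Adj β γ → Q β γ = 0) (B : Matrix V V ℝ) :
    Matrix.trace (Qᵀ * projM G B) = Matrix.trace (Qᵀ * B) := by
  rw [trace_form, trace_form]
  refine Finset.sum_congr rfl fun p _ => ?_
  by_cases h : p.1 = p.2 ∨ G.Adj p.1 p.2
  · simp [projM, h]
  · push_neg at h
    rw [hQ _ _ h.1 h.2]
    ring

lemma projM_isSymm {P : Matrix V V ℝ} (hP : P.IsSymm) : (projM G P).IsSymm := by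
  ext β γ
  simp only [projM, Matrix.transpose_apply, Matrix.of_apply]
  have hadj : (γ = β ∨ G.Adj γ β) ↔ (β = γ ∨ G.Adj β γ) := by
    constructor <;> (rintro (rfl | h); exacts [Or.inl rfl, Or.inr (G.adj_symm h)])
  have hPe : P γ β = P β γ := by
    have := congrFun (congrFun hP.eq β) γ
    simpa using this
  rw [if_congr hadj hPe rfl]

end ProjStuff

noncomputable def matE : Matrix V V ℝ ≃ₗ[ℝ] EuclideanSpace ℝ (V × V) where
  toFun A := (WithLp.equiv 2 _).symm fun p : V × V => A p.1 p.2
  invFun x := Matrix.of fun β γ => x (β, γ)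
  map_add' A B := rfl
  map_smul' c A := rfl
  left_inv A := rfl
  right_inv x := rfl

lemma matE_apply (A : Matrix V V ℝ) (p : V × V) : matE A p = A p.1 p.2 := rfl

lemma matE_inner (A B : Matrix V V ℝ) :
    (inner ℝ (matE A) (matE B) : ℝ) = Matrix.trace (Aᵀ * B) := by
  rw [trace_form]
  rw [PiLp.inner_apply]
  simp [matE_apply, RCLike.inner_apply]
  exact Finset.sum_congr rfl fun p _ => mul_comm _ _

noncomputable def matCE : Matrix V V ℝ ≃L[ℝ] EuclideanSpace ℝ (V × V) :=
  matE.toContinuousLinearEquiv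

lemma matE_norm_le {P : Matrix V V ℝ} (hP : P.PosSemidef) :
    ‖matE P‖ ≤ (Fintype.card V : ℝ) * Matrix.trace P := by
  have htr : ∀ β γ : V, |P β γ| ≤ Matrix.trace P := by
    intro β γ
    refine (psd_entry_abs_le hP β γ).trans ?_
    have h1 : P β β ≤ Matrix.trace P :=
      Finset.single_le_sum (f := fun i => P i i) (fun i _ => psd_diag_nonneg hP i)
        (Finset.mem_univ β)
    have h2 : P γ γ ≤ Matrix.trace P :=
      Finset.single_le_sum (f := fun i => P i i) (fun i _ => psd_diag_nonneg hP i)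
        (Finset.mem_univ γ)
    linarith
  have htr0 : 0 ≤ Matrix.trace P := Finset.sum_nonneg fun i _ => psd_diag_nonneg hP i
  rw [EuclideanSpace.norm_eq]
  have hb : ∑ p : V × V, ‖matE P p‖ ^ 2 ≤ ∑ _p : V × V, (Matrix.trace P) ^ 2 := by
    refine Finset.sum_le_sum fun p _ => ?_
    rw [matE_apply, Real.norm_eq_abs]
    exact pow_le_pow_left₀ (abs_nonneg _) (htr p.1 p.2) 2
  refine (Real.sqrt_le_sqrt hb).trans ?_
  rw [Finset.sum_const, Finset.card_univ, Fintype.card_prod, nsmul_eq_mul]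
  rw [show ((Fintype.card V * Fintype.card V : ℕ) : ℝ) * Matrix.trace P ^ 2
      = ((Fintype.card V : ℝ) * Matrix.trace P) ^ 2 by push_cast; ring]
  rw [Real.sqrt_sq (by positivity)]

lemma matE_coord_abs_le (x : EuclideanSpace ℝ (V × V)) (p : V × V) : |x p| ≤ ‖x‖ := by
  rw [EuclideanSpace.norm_eq, ← Real.sqrt_sq_eq_abs]
  refine Real.sqrt_le_sqrt ?_
  have : x p ^ 2 = ‖x p‖ ^ 2 := by rw [Real.norm_eq_abs, sq_abs]
  rw [this]
  exact Finset.single_le_sum (f := fun q => ‖x q‖ ^ 2) (fun q _ => by positivity)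
    (Finset.mem_univ p)

lemma matCE_apply (A : Matrix V V ℝ) : matCE A = matE A := rfl
lemma matCE_symm_apply (x : EuclideanSpace ℝ (V × V)) : matCE.symm x = matE.symm x := rfl

lemma isClosed_comp_image (G : SimpleGraph V) [DecidableRel G.Adj] :
    IsClosed ((matCE (V := V)) '' {Q : Matrix V V ℝ | ∃ P, P.PosSemidef ∧ projM G P = Q}) := by
  set S : Set (Matrix V V ℝ) := {Q | ∃ P, P.PosSemidef ∧ projM G P = Q} with hS
  apply isClosed_of_closure_subset
  intro y hy
  set n : ℝ := (Fintype.card V : ℝ) with hn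
  have hn0 : 0 ≤ n := by positivity
  set r : ℝ := n * (n * (‖y‖ + 1)) with hr
  set F : EuclideanSpace ℝ (V × V) → EuclideanSpace ℝ (V × V) :=
    fun x => matCE (projM G (matCE.symm x)) with hF
  have hFcont : Continuous F :=
    matCE.continuous.comp ((projM_continuous G).comp matCE.symm.continuous)
  set K : Set (EuclideanSpace ℝ (V × V)) :=
    {x | (matCE.symm x).PosSemidef} ∩ Metric.closedBall 0 r with hK
  have hKcpt : IsCompact K :=
    (isCompact_closedBall (0 : EuclideanSpace ℝ (V × V)) r).inter_left
      (isClosed_psd.preimage matCE.symm.continuous)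
  have himg : IsCompact (F '' K) := hKcpt.image hFcont
  have hFS : F '' K ⊆ matCE '' S := by
    rintro _ ⟨x, hx, rfl⟩
    exact ⟨projM G (matCE.symm x), ⟨matCE.symm x, hx.1, rfl⟩, rfl⟩
  have hsub : (matCE '' S) ∩ Metric.ball y 1 ⊆ F '' K := by
    rintro z ⟨⟨Q, ⟨P, hP, rfl⟩, rfl⟩, hz⟩
    have hzy : ‖matCE (projM G P)‖ ≤ ‖y‖ + 1 := by
      have hd : dist (matCE (projM G P)) y < 1 := Metric.mem_ball.mp hz
      calc ‖matCE (projM G P)‖ = ‖y + (matCE (projM G P) - y)‖ := by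
            rw [add_sub_cancel]
        _ ≤ ‖y‖ + ‖matCE (projM G P) - y‖ := norm_add_le _ _
        _ ≤ ‖y‖ + 1 := by rw [← dist_eq_norm]; linarith
    have htrP : Matrix.trace P ≤ n * (‖y‖ + 1) := by
      have h1 : Matrix.trace P = ∑ β : V, matE (projM G P) (β, β) := by
        rw [← projM_trace G P]
        rfl
      rw [h1]
      calc ∑ β : V, matE (projM G P) (β, β) ≤ ∑ _β : V, (‖y‖ + 1) := by
            refine Finset.sum_le_sum fun β _ => ?_
            refine le_trans (le_abs_self _) ((matE_coord_abs_le _ _).trans ?_)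
            rw [← matCE_apply]; exact hzy
        _ = n * (‖y‖ + 1) := by
            rw [Finset.sum_const, Finset.card_univ, nsmul_eq_mul, hn]
    refine ⟨matCE P, ⟨?_, ?_⟩, ?_⟩
    · show (matCE.symm (matCE P)).PosSemidef
      rw [matCE.symm_apply_apply]; exact hP
    · rw [Metric.mem_closedBall, dist_zero_right, matCE_apply]
      refine (matE_norm_le hP).trans ?_
      rw [hr, ← hn]
      exact mul_le_mul_of_nonneg_left htrP hn0
    · show matCE (projM G (matCE.symm (matCE P))) = matCE (projM G P)
      rw [matCE.symm_apply_apply]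
  have hy1 : y ∈ closure ((matCE '' S) ∩ Metric.ball y 1) := by
    rw [Metric.mem_closure_iff] at hy ⊢
    intro ε hε
    obtain ⟨b, hb, hbd⟩ := hy (min ε 1) (lt_min hε one_pos)
    refine ⟨b, ⟨hb, ?_⟩, lt_of_lt_of_le hbd (min_le_left _ _)⟩
    rw [Metric.mem_ball, dist_comm]
    exact lt_of_lt_of_le hbd (min_le_right _ _)
  exact hFS (himg.isClosed.closure_subset ((closure_mono hsub) hy1))

lemma trace_form_comm (A B : Matrix V V ℝ) :
    Matrix.trace (Aᵀ * B) = Matrix.trace (Bᵀ * A) := by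
  rw [trace_form, trace_form]
  exact Finset.sum_congr rfl fun p _ => mul_comm _ _

lemma psd_isSymm {P : Matrix V V ℝ} (hP : P.PosSemidef) : P.IsSymm := by
  have := hP.1
  rwa [Matrix.IsHermitian, Matrix.conjTranspose_eq_transpose_of_trivial] at this

lemma isHermitian_of_isSymm {P : Matrix V V ℝ} (hP : P.IsSymm) : P.IsHermitian := by
  rwa [Matrix.IsHermitian, Matrix.conjTranspose_eq_transpose_of_trivial]

lemma quad_eq_trace (Q : Matrix V V ℝ) (x : V → ℝ) :
    x ⬝ᵥ Q *ᵥ x = Matrix.trace (Qᵀ * Matrix.vecMulVec x x) := by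
  rw [trace_form]
  simp only [Matrix.vecMulVec_apply, dotProduct, Matrix.mulVec, Fintype.sum_prod_type]
  refine Finset.sum_congr rfl fun β _ => ?_
  rw [Finset.mul_sum]
  exact Finset.sum_congr rfl fun γ _ => by ring

lemma psd_vecMulVec (x : V → ℝ) : (Matrix.vecMulVec x x).PosSemidef := by
  refine Matrix.PosSemidef.of_dotProduct_mulVec_nonneg (isHermitian_of_isSymm ?_) fun y => ?_
  · ext i j; simp [Matrix.vecMulVec_apply, mul_comm]
  · have : star y ⬝ᵥ Matrix.vecMulVec x x *ᵥ y = (∑ i, x i * y i) ^ 2 := by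
      simp only [star_trivial, dotProduct, Matrix.mulVec, Matrix.vecMulVec_apply]
      rw [sq, Finset.sum_mul_sum]
      refine Finset.sum_congr rfl fun i _ => ?_
      rw [Finset.mul_sum]
      exact Finset.sum_congr rfl fun j _ => by ring
    rw [this]
    positivity

lemma trace_symmetrize (Y A : Matrix V V ℝ) (hA : A.IsSymm) :
    Matrix.trace ((((1:ℝ)/2) • (Y + Yᵀ))ᵀ * A) = Matrix.trace (Yᵀ * A) := by
  have hYA : Matrix.trace (Y * A) = Matrix.trace (Yᵀ * A) := by
    rw [← Matrix.trace_transpose (Y * A), Matrix.transpose_mul, Matrix.trace_mul_comm, hA.eq]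
  rw [Matrix.transpose_smul, Matrix.transpose_add, Matrix.transpose_transpose,
    Matrix.smul_mul, Matrix.add_mul, Matrix.trace_smul, Matrix.trace_add, hYA]
  simp [smul_eq_mul]; ring

section DualAux
variable (G : SimpleGraph V) [DecidableRel G.Adj]

lemma psd_of_dual {Q : Matrix V V ℝ} (hsym : Q.IsSymm)
    (hpat : ∀ β γ, β ≠ γ → ¬ G.Adj β γ → Q β γ = 0)
    (h : ∀ P : Matrix V V ℝ, P.PosSemidef → 0 ≤ Matrix.trace (Qᵀ * projM G P)) :
    Q.PosSemidef := by
  refine Matrix.PosSemidef.of_dotProduct_mulVec_nonneg (isHermitian_of_isSymm hsym) fun x => ?_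
  rw [star_trivial, quad_eq_trace]
  rw [← trace_eq_of_pattern G hpat]
  exact h _ (psd_vecMulVec x)

end DualAux

end AuxPSD

/-- The PSD completable cone `Π_G(S_+)` and the cone of PSD matrices with sparsity
pattern `G` are dual to each other inside `S_G` with respect to the trace inner
product. -/
theorem psd_completable_cone_dual (V : Type*) [Fintype V] [DecidableEq V]
    (G : SimpleGraph V) [DecidableRel G.Adj] :
    let SG : Set (Matrix V V ℝ) :=
      {Q | Q.IsSymm ∧ ∀ β γ, β ≠ γ → ¬ G.Adj β γ → Q β γ = 0}
    let proj : Matrix V V ℝ → Matrix V V ℝ := fun P =>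
      Matrix.of fun β γ => if β = γ ∨ G.Adj β γ then P β γ else 0
    let comp : Set (Matrix V V ℝ) := {Q | ∃ P, P.PosSemidef ∧ proj P = Q}
    let psd : Set (Matrix V V ℝ) := {Q ∈ SG | Q.PosSemidef}
    comp = {Q ∈ SG | ∀ P ∈ psd, 0 ≤ Matrix.trace (Qᵀ * P)} ∧
      psd = {Q ∈ SG | ∀ P ∈ comp, 0 ≤ Matrix.trace (Qᵀ * P)} := by
  intro SG proj comp psd
  have hcomp : comp = {Q : Matrix V V ℝ | ∃ P, P.PosSemidef ∧ projM G P = Q} := rfl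
  have hpatproj : ∀ P : Matrix V V ℝ, ∀ β γ, β ≠ γ → ¬ G.Adj β γ → projM G P β γ = 0 := by
    intro P β γ h1 h2
    show (if β = γ ∨ G.Adj β γ then P β γ else 0) = 0
    rw [if_neg (by tauto)]
  have hcompSG : ∀ Q ∈ comp, Q ∈ SG := by
    rw [hcomp]
    rintro Q ⟨P, hP, rfl⟩
    exact ⟨projM_isSymm G (psd_isSymm hP), hpatproj P⟩
  constructor
  · ext Q
    simp only [hcomp, Set.mem_setOf_eq, Set.mem_sep_iff]
    constructor
    · rintro ⟨P₀, hP₀, rfl⟩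
      refine ⟨hcompSG _ ⟨P₀, hP₀, rfl⟩, ?_⟩
      rintro P ⟨⟨hPsym, hPpat⟩, hPpsd⟩
      calc (0:ℝ) ≤ Matrix.trace (Pᵀ * P₀) := psd_trace_mul_nonneg hPpsd hP₀
        _ = Matrix.trace (Pᵀ * projM G P₀) := (trace_eq_of_pattern G hPpat P₀).symm
        _ = Matrix.trace ((projM G P₀)ᵀ * P) := trace_form_comm _ _
    · rintro ⟨⟨hQsym, hQpat⟩, h⟩
      by_contra hQc
      set Sc : Set (Matrix V V ℝ) := {Q | ∃ P, P.PosSemidef ∧ projM G P = Q} with hSc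
      set Kc : ConvexCone ℝ (EuclideanSpace ℝ (V × V)) :=
        { carrier := matCE '' Sc
          smul_mem' := by
            rintro c hc _ ⟨_, ⟨P, hP, rfl⟩, rfl⟩
            exact ⟨c • projM G P, ⟨c • P, psd_smul hP hc.le, projM_smul G c P⟩,
              _root_.map_smul matCE c _⟩
          add_mem' := by
            rintro _ ⟨_, ⟨P1, h1, rfl⟩, rfl⟩ _ ⟨_, ⟨P2, h2, rfl⟩, rfl⟩
            exact ⟨projM G P1 + projM G P2, ⟨P1 + P2, h1.add h2, projM_add G P1 P2⟩,
              map_add matCE _ _⟩ } with hKc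
      have hKcC : (Kc : Set (EuclideanSpace ℝ (V × V))) = matCE '' Sc := rfl
      have hne : (Kc : Set (EuclideanSpace ℝ (V × V))).Nonempty :=
        ⟨matCE 0, ⟨0, ⟨0, Matrix.PosSemidef.zero, by ext β γ; simp [projM]⟩, rfl⟩⟩
      have hclosed : IsClosed (Kc : Set (EuclideanSpace ℝ (V × V))) := by
        rw [hKcC]; exact isClosed_comp_image G
      have hdisj : matCE Q ∉ Kc := by
        intro hmem
        rw [← SetLike.mem_coe, hKcC] at hmem
        obtain ⟨Q', hQ', hQQ⟩ := hmem
        exact hQc (matCE.injective hQQ ▸ hQ')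
      obtain ⟨y, hy1, hy2⟩ : ∃ y, (∀ x ∈ (Kc : Set (EuclideanSpace ℝ (V × V))),
          0 ≤ (inner ℝ x y : ℝ)) ∧ (inner ℝ y (matCE Q) : ℝ) < 0 := by
        obtain ⟨y, hy1, hy2⟩ := ProperCone.hyperplane_separation'
          (C := ⟨Kc.toPointedCone (.of_nonempty_of_isClosed hne hclosed), hclosed⟩) hdisj
        exact ⟨y, hy1, by rwa [real_inner_comm]⟩
      set Y : Matrix V V ℝ := matE.symm y with hY
      have hyY : y = matE Y := (matE.apply_symm_apply y).symm
      have hy1' : ∀ P : Matrix V V ℝ, P.PosSemidef →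
          0 ≤ Matrix.trace ((projM G P)ᵀ * Y) := by
        intro P hP
        have := hy1 (matCE (projM G P)) ⟨projM G P, ⟨P, hP, rfl⟩, rfl⟩
        rwa [matCE_apply, hyY, matE_inner] at this
      set W : Matrix V V ℝ := ((1:ℝ)/2) • (Y + Yᵀ) with hW
      set Z : Matrix V V ℝ := projM G W with hZ
      have hWsym : W.IsSymm := by
        unfold Matrix.IsSymm
        rw [hW, Matrix.transpose_smul, Matrix.transpose_add, Matrix.transpose_transpose,
          add_comm]
      have hZsym : Z.IsSymm := projM_isSymm G hWsym
      have hZpat : ∀ β γ, β ≠ γ → ¬ G.Adj β γ → Z β γ = 0 := hpatproj W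
      have hZkey : ∀ M : Matrix V V ℝ, M.PosSemidef →
          0 ≤ Matrix.trace (Zᵀ * projM G M) := by
        intro M hM
        have hA : (projM G M).IsSymm := projM_isSymm G (psd_isSymm hM)
        calc (0:ℝ) ≤ Matrix.trace ((projM G M)ᵀ * Y) := hy1' M hM
          _ = Matrix.trace (Yᵀ * projM G M) := trace_form_comm _ _
          _ = Matrix.trace (Wᵀ * projM G M) := (trace_symmetrize Y (projM G M) hA).symm
          _ = Matrix.trace ((projM G M)ᵀ * W) := trace_form_comm _ _
          _ = Matrix.trace ((projM G M)ᵀ * projM G W) :=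
              (trace_eq_of_pattern G (hpatproj M) W).symm
          _ = Matrix.trace (Zᵀ * projM G M) := trace_form_comm _ _
      have hZpsd : Z.PosSemidef := psd_of_dual G hZsym hZpat hZkey
      have hfinal := h Z ⟨⟨hZsym, hZpat⟩, hZpsd⟩
      have hcontr : Matrix.trace (Qᵀ * Z) < 0 := by
        have h1 : Matrix.trace (Qᵀ * Z) = Matrix.trace (Yᵀ * Q) := by
          calc Matrix.trace (Qᵀ * Z) = Matrix.trace (Qᵀ * W) := trace_eq_of_pattern G hQpat W
            _ = Matrix.trace (Wᵀ * Q) := trace_form_comm _ _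
            _ = Matrix.trace (Yᵀ * Q) := trace_symmetrize Y Q hQsym
        rw [h1]
        have h2 : (inner ℝ y (matCE Q) : ℝ) = Matrix.trace (Yᵀ * Q) := by
          rw [hyY, matCE_apply, matE_inner]
        rw [← h2]
        exact hy2
      linarith
  · ext Q
    simp only [hcomp, Set.mem_setOf_eq, Set.mem_sep_iff]
    constructor
    · rintro ⟨⟨hQsym, hQpat⟩, hQpsd⟩
      refine ⟨⟨hQsym, hQpat⟩, ?_⟩
      rintro P ⟨P₀, hP₀, rfl⟩
      rw [trace_eq_of_pattern G hQpat]
      exact psd_trace_mul_nonneg hQpsd hP₀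
    · rintro ⟨⟨hQsym, hQpat⟩, h⟩
      exact ⟨⟨hQsym, hQpat⟩, psd_of_dual G hQsym hQpat fun P hP => h _ ⟨P, hP, rfl⟩⟩
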